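/- Privacy of the masking protocol against a non-cutting coalition: Let G = (V,E) be a simple undirected graph, C ⊂ V with H = V\C nonempty such that the induced subgraph on H is connected. Let (b_e)_{e∈E} be i.i.d. uniform on ZMod p (p prime), and define a_i = Σ_e ∇_{i,e} b_e and s̃_i = s_i + a_i for inputs s ∈ (ZMod p)^n. Then conditioned on (b_e)_{e∈E_C} (edges incident to C), the vector (s̃_i)_{i∈H} is uniformly distributed over the affine subspace {w ∈ (ZMod p)^H : Σ_{i∈H} w_i = Σ_{i∈H} s_i + Σ_{i∈H} Σ_{e∈E_C} ∇_{i,e} b_e}. In particular this conditional distribution depends on (s_i)_{i∈H} only through Σ_{i∈H} s_i. -/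

import Mathlib

open Finset Matrix
open scoped ENNReal

def incEntry (p : ℕ) {V : Type*} [DecidableEq V] [LinearOrder V] (e : Sym2 V) (i : V) :
    ZMod p :=
  if h : i ∈ e then (if i < Sym2.Mem.other' h then 1 else -1) else 0

section helpers

open scoped ENNReal

private lemma pmf_map_uniform_of_const_fibers {α β : Type*} [Fintype α] [Nonempty α] [Fintype β]
    [DecidableEq β] (f : α → β) (k : ℕ)
    (hfib : ∀ b ∈ Finset.univ.image f, (Finset.univ.filter fun a => f a = b).card = k) :
    PMF.map f (PMF.uniformOfFintype α) =
      PMF.uniformOfFinset (Finset.univ.image f) (Finset.univ_nonempty.image f) := by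
  have hcard : Fintype.card α = (Finset.univ.image f).card * k := by
    rw [Fintype.card, Finset.card_eq_sum_card_fiberwise
      (fun a _ => Finset.mem_image_of_mem f (Finset.mem_univ a)),
      Finset.sum_congr rfl hfib, Finset.sum_const, smul_eq_mul]
  have hk : k ≠ 0 := by
    intro h
    rw [h, mul_zero] at hcard
    exact absurd hcard Fintype.card_ne_zero
  ext b
  rw [PMF.map_apply, tsum_fintype]
  simp only [PMF.uniformOfFintype_apply, PMF.uniformOfFinset_apply]
  have hflt : (Finset.univ.filter fun a => b = f a) = Finset.univ.filter fun a => f a = b := by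
    simp [eq_comm]
  rw [← Finset.sum_filter, Finset.sum_const, hflt]
  by_cases hb : b ∈ Finset.univ.image f
  · rw [hfib b hb, if_pos hb, hcard, nsmul_eq_mul, Nat.cast_mul,
      ENNReal.mul_inv (Or.inr (ENNReal.natCast_ne_top k)) (Or.inr (Nat.cast_ne_zero.mpr hk)),
      ← mul_assoc, mul_comm (k : ℝ≥0∞), mul_assoc,
      ENNReal.mul_inv_cancel (Nat.cast_ne_zero.mpr hk) (ENNReal.natCast_ne_top k), mul_one]
  · rw [if_neg hb, Finset.filter_false_of_mem, Finset.card_empty, zero_smul]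
    intro a _ ha
    exact hb (ha ▸ Finset.mem_image_of_mem f (Finset.mem_univ a))

/-- For a matrix whose columns sum to zero and whose transpose has kernel contained in the
constants, the range of `mulVec` is exactly the sum-zero hyperplane. -/
private lemma range_mulVecLin_eq_sumZero {F m e : Type*} [Field F] [Fintype m] [Fintype e]
    [DecidableEq m] [Nonempty m] (M : Matrix m e F)
    (hcol : ∀ j, ∑ i, M i j = 0)
    (hker : ∀ x : m → F, Mᵀ.mulVec x = 0 → ∀ u v, x u = x v) :
    LinearMap.range M.mulVecLin
      = LinearMap.ker (∑ i, LinearMap.proj (R := F) (φ := fun _ : m => F) i) := by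
  set φ : (m → F) →ₗ[F] F := ∑ i, LinearMap.proj (R := F) (φ := fun _ : m => F) i with hφ
  have hφ_apply : ∀ x : m → F, φ x = ∑ i, x i := by
    intro x
    simp [hφ, LinearMap.sum_apply]
  obtain ⟨i₀⟩ := (inferInstance : Nonempty m)
  have hφsurj : Function.Surjective φ := by
    intro y
    exact ⟨Pi.single i₀ y, by rw [hφ_apply]; simp⟩
  have hrangeφ : LinearMap.range φ = ⊤ := LinearMap.range_eq_top.mpr hφsurj
  have h1 : Module.finrank F (LinearMap.ker φ) + 1 = Fintype.card m := by
    have := LinearMap.finrank_range_add_finrank_ker φ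
    rw [hrangeφ, finrank_top, Module.finrank_self, Module.finrank_pi] at this
    omega
  have hkle : LinearMap.ker Mᵀ.mulVecLin ≤ Submodule.span F {(fun _ => (1:F) : m → F)} := by
    intro x hx
    have hx' : Mᵀ.mulVec x = 0 := hx
    have := hker x hx'
    rw [Submodule.mem_span_singleton]
    exact ⟨x i₀, by funext v; simp [this v i₀]⟩
  have hone : (fun _ => (1:F) : m → F) ≠ 0 := by
    intro h
    have := congrFun h i₀
    simp at this
  have hks : Module.finrank F (LinearMap.ker Mᵀ.mulVecLin) ≤ 1 := by
    calc Module.finrank F (LinearMap.ker Mᵀ.mulVecLin)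
        ≤ Module.finrank F (Submodule.span F {(fun _ => (1:F) : m → F)}) :=
          Submodule.finrank_mono hkle
      _ = 1 := finrank_span_singleton hone
  have h2 : Module.finrank F (LinearMap.range Mᵀ.mulVecLin)
      + Module.finrank F (LinearMap.ker Mᵀ.mulVecLin) = Fintype.card m := by
    have := LinearMap.finrank_range_add_finrank_ker Mᵀ.mulVecLin
    rwa [Module.finrank_pi] at this
  have hrk : Matrix.rank Mᵀ = Module.finrank F (LinearMap.range Mᵀ.mulVecLin) := rfl
  have hrk2 : Matrix.rank M = Module.finrank F (LinearMap.range M.mulVecLin) := rfl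
  have h3 : Module.finrank F (LinearMap.ker φ)
      ≤ Module.finrank F (LinearMap.range M.mulVecLin) := by
    have := Matrix.rank_transpose M
    omega
  have hle : LinearMap.range M.mulVecLin ≤ LinearMap.ker φ := by
    rintro _ ⟨b, rfl⟩
    rw [LinearMap.mem_ker, hφ_apply]
    simp only [Matrix.mulVecLin_apply, Matrix.mulVec, dotProduct]
    rw [Finset.sum_comm]
    simp [← Finset.sum_mul, hcol]
  exact Submodule.eq_of_le_of_finrank_le hle h3

private lemma incEntry_left {p : ℕ} {V : Type*} [DecidableEq V] [LinearOrder V] {u v : V}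
    (huv : u ≠ v) : incEntry p s(u, v) u = if u < v then 1 else -1 := by
  have h : u ∈ s(u, v) := Sym2.mem_mk_left u v
  have ho : Sym2.Mem.other' h = v := Sym2.congr_right.mp (Sym2.other_spec' h)
  rw [incEntry, dif_pos h, ho]

private lemma incEntry_right {p : ℕ} {V : Type*} [DecidableEq V] [LinearOrder V] {u v : V}
    (huv : u ≠ v) : incEntry p s(u, v) v = if v < u then 1 else -1 := by
  rw [Sym2.eq_swap]
  exact incEntry_left huv.symm

private lemma incEntry_not_mem {p : ℕ} {V : Type*} [DecidableEq V] [LinearOrder V] {e : Sym2 V}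
    {i : V} (h : i ∉ e) : incEntry p e i = 0 := dif_neg h

private lemma incEntry_add {p : ℕ} {V : Type*} [DecidableEq V] [LinearOrder V] {u v : V}
    (huv : u ≠ v) : incEntry p s(u, v) u + incEntry p s(u, v) v = 0 := by
  rw [incEntry_left huv, incEntry_right huv]
  rcases lt_or_gt_of_ne huv with h | h
  · rw [if_pos h, if_neg (asymm h)]; ring
  · rw [if_neg (asymm h), if_pos h]; ring

/-- Sum over a subtype of `incEntry · * x ·` for an edge whose endpoints satisfy `P`. -/
private lemma sum_subtype_incEntry {p : ℕ} {V : Type*} [DecidableEq V] [LinearOrder V]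
    (P : V → Prop) [Fintype {i // P i}] {u v : V} (huv : u ≠ v) (hu : P u) (hv : P v)
    (x : {i // P i} → ZMod p) :
    ∑ i : {i // P i}, incEntry p s(u, v) (i : V) * x i
      = incEntry p s(u, v) u * x ⟨u, hu⟩ + incEntry p s(u, v) v * x ⟨v, hv⟩ := by
  apply Finset.sum_eq_add_of_mem (⟨u, hu⟩ : {i // P i}) ⟨v, hv⟩ (Finset.mem_univ _)
    (Finset.mem_univ _) (by simp [Subtype.ext_iff, huv])
  intro c _ hc
  have : (c : V) ∉ s(u, v) := by
    rw [Sym2.mem_iff]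
    rintro (h | h)
    · exact hc.1 (Subtype.ext h)
    · exact hc.2 (Subtype.ext h)
  rw [incEntry_not_mem this, zero_mul]

end helpers

theorem honest_effective_inputs_uniform {n p : ℕ} [Fact p.Prime]
    (G : SimpleGraph (Fin n)) [DecidableRel G.Adj] (C : Finset (Fin n))
    [DecidableRel (G.induce {v | v ∉ C}).Adj]
    (hH : (G.induce {v | v ∉ C}).Connected)
    (nabla : Matrix (Fin n) ↥G.edgeFinset (ZMod p))
    (hnabla : ∀ (i : Fin n) (e : ↥G.edgeFinset), nabla i e = incEntry p (e : Sym2 (Fin n)) i)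
    (s : Fin n → ZMod p)
    (c : {e : ↥G.edgeFinset // ∃ v ∈ C, v ∈ (e : Sym2 (Fin n))} → ZMod p) :
    ∃ hne, PMF.map
        (fun bH : {e : ↥G.edgeFinset // ¬ ∃ v ∈ C, v ∈ (e : Sym2 (Fin n))} → ZMod p =>
          fun i : ↥{v : Fin n | v ∉ C} =>
            s i + ∑ e : ↥G.edgeFinset, nabla i e *
              (if h : ∃ v ∈ C, v ∈ (e : Sym2 (Fin n)) then c ⟨e, h⟩ else bH ⟨e, h⟩))
        (PMF.uniformOfFintype
          ({e : ↥G.edgeFinset // ¬ ∃ v ∈ C, v ∈ (e : Sym2 (Fin n))} → ZMod p))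
      = PMF.uniformOfFinset
          (Finset.univ.filter fun w : ↥{v : Fin n | v ∉ C} → ZMod p =>
            ∑ i, w i = (∑ i : ↥{v : Fin n | v ∉ C}, s i)
              + ∑ i : ↥{v : Fin n | v ∉ C},
                  ∑ e : {e : ↥G.edgeFinset // ∃ v ∈ C, v ∈ (e : Sym2 (Fin n))},
                    nabla i e * c e) hne := by
  classical
  have hp : Nonempty ↥{v : Fin n | v ∉ C} := hH.nonempty
  let H : Set (Fin n) := {v | v ∉ C}
  let F := ZMod p
  -- the matrix restricted to honest vertices and honest edges
  set M : Matrix ↥H {e : ↥G.edgeFinset // ¬ ∃ v ∈ C, v ∈ (e : Sym2 (Fin n))} F :=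
    fun i e => nabla i e.1 with hM
  clear_value M
  set f0 : ↥H → F := fun i => s i +
      ∑ e : {e : ↥G.edgeFinset // ∃ v ∈ C, v ∈ (e : Sym2 (Fin n))}, nabla i e.1 * c e with hf0
  clear_value f0
  -- rewrite the random map as an affine map
  have hfun : (fun bH : {e : ↥G.edgeFinset // ¬ ∃ v ∈ C, v ∈ (e : Sym2 (Fin n))} → F =>
        fun i : ↥H => s i + ∑ e : ↥G.edgeFinset, nabla i e *
          (if h : ∃ v ∈ C, v ∈ (e : Sym2 (Fin n)) then c ⟨e, h⟩ else bH ⟨e, h⟩))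
      = fun bH => f0 + M.mulVec bH := by
    funext bH
    funext i
    have hsplit := Fintype.sum_subtype_add_sum_subtype
      (fun e : ↥G.edgeFinset => ∃ v ∈ C, v ∈ (e : Sym2 (Fin n)))
      (fun e => nabla i e *
        (if h : ∃ v ∈ C, v ∈ (e : Sym2 (Fin n)) then c ⟨e, h⟩ else bH ⟨e, h⟩))
    rw [← hsplit]
    have h1 : ∀ e : {e : ↥G.edgeFinset // ∃ v ∈ C, v ∈ (e : Sym2 (Fin n))},
        nabla i e.1 * (if h : ∃ v ∈ C, v ∈ ((e : ↥G.edgeFinset) : Sym2 (Fin n))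
          then c ⟨e, h⟩ else bH ⟨e, h⟩) = nabla i e.1 * c e := by
      rintro ⟨e, he⟩
      rw [dif_pos he]
    have h2 : ∀ e : {e : ↥G.edgeFinset // ¬ ∃ v ∈ C, v ∈ (e : Sym2 (Fin n))},
        nabla i e.1 * (if h : ∃ v ∈ C, v ∈ ((e : ↥G.edgeFinset) : Sym2 (Fin n))
          then c ⟨e, h⟩ else bH ⟨e, h⟩) = M i e * bH e := by
      rintro ⟨e, he⟩
      rw [dif_neg he, hM]
    rw [Finset.sum_congr rfl fun e _ => h1 e, Finset.sum_congr rfl fun e _ => h2 e]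
    show _ = f0 i + (M.mulVec bH) i
    rw [hf0]
    simp only [Matrix.mulVec, dotProduct]
    ring
  -- column sums vanish
  have hcol : ∀ j, ∑ i : ↥H, M i j = 0 := by
    rintro ⟨⟨z, hz⟩, hnc⟩
    simp only [hM, hnabla]
    revert hz hnc
    induction z using Sym2.ind with
    | _ u v =>
      intro hz hnc
      have hadj : G.Adj u v := by
        rwa [SimpleGraph.mem_edgeFinset, SimpleGraph.mem_edgeSet] at hz
      have huv : u ≠ v := hadj.ne
      have hu : u ∈ H := fun hC => hnc ⟨u, hC, Sym2.mem_mk_left u v⟩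
      have hv : v ∈ H := fun hC => hnc ⟨v, hC, Sym2.mem_mk_right u v⟩
      have hsum := sum_subtype_incEntry (p := p) (fun i => i ∈ H) huv hu hv (fun _ => 1)
      simp only [mul_one] at hsum
      exact hsum.trans (incEntry_add huv)
  -- kernel of the transpose consists of constants
  have hker : ∀ x : ↥H → F, Mᵀ.mulVec x = 0 → ∀ u v, x u = x v := by
    intro x hx
    have step : ∀ a b : ↥H, (G.induce H).Adj a b → x a = x b := by
      intro a b hab
      have hadj : G.Adj (a : Fin n) (b : Fin n) := by
        simpa using hab
      have hab' : (a : Fin n) ≠ (b : Fin n) := hadj.ne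
      have hz : s((a : Fin n), (b : Fin n)) ∈ G.edgeFinset := by
        rw [SimpleGraph.mem_edgeFinset, SimpleGraph.mem_edgeSet]; exact hadj
      have hnc : ¬ ∃ w ∈ C, w ∈ s((a : Fin n), (b : Fin n)) := by
        rintro ⟨w, hwC, hw⟩
        rw [Sym2.mem_iff] at hw
        rcases hw with rfl | rfl
        · exact a.2 hwC
        · exact b.2 hwC
      have h0 := congrFun hx ⟨⟨s((a : Fin n), (b : Fin n)), hz⟩, hnc⟩
      have hsum : ∑ i : ↥H, incEntry p s((a : Fin n), (b : Fin n)) (i : Fin n) * x i = 0 := by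
        rw [Pi.zero_apply] at h0
        rw [← h0]
        simp only [Matrix.mulVec, dotProduct, Matrix.transpose_apply, hM, hnabla]
        rfl
      rw [sum_subtype_incEntry (p := p) (fun i => i ∈ H) hab' a.2 b.2 x] at hsum
      have ha : (⟨(a : Fin n), a.2⟩ : ↥H) = a := rfl
      have hb : (⟨(b : Fin n), b.2⟩ : ↥H) = b := rfl
      rw [ha, hb] at hsum
      rcases lt_or_gt_of_ne hab' with h | h
      · rw [incEntry_left hab', incEntry_right hab', if_pos h, if_neg (asymm h)] at hsum
        linear_combination hsum
      · rw [incEntry_left hab', incEntry_right hab', if_neg (asymm h), if_pos h] at hsum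
        linear_combination -hsum
    intro u v
    obtain ⟨w⟩ := hH.preconnected u v
    induction w with
    | nil => rfl
    | cons h _ ih => exact (step _ _ h).trans ih
  -- range of the honest incidence map is the sum-zero hyperplane
  haveI : Nonempty (↥H) := hp
  have hrange := range_mulVecLin_eq_sumZero M hcol hker
  have hmem : ∀ y : ↥H → F, (∃ b, M.mulVec b = y) ↔ ∑ i, y i = 0 := by
    intro y
    constructor
    · rintro ⟨b, rfl⟩
      have hb : M.mulVecLin b ∈ LinearMap.ker
          (∑ i : ↥H, LinearMap.proj (R := F) (φ := fun _ : ↥H => F) i) :=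
        hrange ▸ LinearMap.mem_range_self _ b
      simpa [LinearMap.sum_apply, Matrix.mulVecLin_apply] using hb
    · intro hy
      have : y ∈ LinearMap.range M.mulVecLin := by
        rw [hrange]
        simp [LinearMap.mem_ker, LinearMap.sum_apply, hy]
      obtain ⟨b, hb⟩ := this
      exact ⟨b, hb⟩
  -- the affine map
  set f : ({e : ↥G.edgeFinset // ¬ ∃ v ∈ C, v ∈ (e : Sym2 (Fin n))} → F) → (↥H → F) :=
    fun bH => f0 + M.mulVec bH with hfdef
  -- image of f is the affine hyperplane
  have himg : Finset.univ.image f =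
      (Finset.univ.filter fun w : ↥H → F =>
        ∑ i, w i = (∑ i : ↥H, s i)
          + ∑ i : ↥H, ∑ e : {e : ↥G.edgeFinset // ∃ v ∈ C, v ∈ (e : Sym2 (Fin n))},
              nabla i e * c e) := by
    have hsumf0 : ∑ i : ↥H, f0 i = (∑ i : ↥H, s i)
        + ∑ i : ↥H, ∑ e : {e : ↥G.edgeFinset // ∃ v ∈ C, v ∈ (e : Sym2 (Fin n))},
            nabla i e * c e := by
      rw [hf0, Finset.sum_add_distrib]
    ext w
    rw [Finset.mem_image, Finset.mem_filter]
    constructor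
    · rintro ⟨b, _, rfl⟩
      refine ⟨Finset.mem_univ _, ?_⟩
      have hMb : ∑ i : ↥H, (M.mulVec b) i = 0 := (hmem (M.mulVec b)).mp ⟨b, rfl⟩
      rw [hfdef]
      show ∑ i : ↥H, (f0 + M.mulVec b) i = _
      simp only [Pi.add_apply]
      rw [Finset.sum_add_distrib, hMb, add_zero, hsumf0]
    · rintro ⟨-, hw⟩
      have : ∑ i : ↥H, (w - f0) i = 0 := by
        simp only [Pi.sub_apply]
        rw [Finset.sum_sub_distrib, hsumf0, hw, sub_self]
      obtain ⟨b, hb⟩ := (hmem (w - f0)).mpr this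
      refine ⟨b, Finset.mem_univ _, ?_⟩
      rw [hfdef]
      show f0 + M.mulVec b = w
      rw [hb]
      ring
  -- constant fiber sizes
  set k := (Finset.univ.filter fun b :
      {e : ↥G.edgeFinset // ¬ ∃ v ∈ C, v ∈ (e : Sym2 (Fin n))} → F =>
        M.mulVec b = 0).card with hk
  have hfib : ∀ w ∈ Finset.univ.image f,
      (Finset.univ.filter fun b => f b = w).card = k := by
    intro w hw
    obtain ⟨b0, -, rfl⟩ := Finset.mem_image.mp hw
    rw [hk]
    apply Finset.card_bij' (fun b _ => b - b0) (fun b _ => b + b0)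
    · intro b hb
      rw [Finset.mem_filter] at hb ⊢
      refine ⟨Finset.mem_univ _, ?_⟩
      have : f0 + M.mulVec b = f0 + M.mulVec b0 := hb.2
      have h2 : M.mulVec b = M.mulVec b0 := by
        have := congrArg (fun z => z - f0) this
        simpa using this
      rw [Matrix.mulVec_sub, h2, sub_self]
    · intro b hb
      rw [Finset.mem_filter] at hb ⊢
      refine ⟨Finset.mem_univ _, ?_⟩
      show f0 + M.mulVec (b + b0) = f0 + M.mulVec b0
      rw [Matrix.mulVec_add, hb.2, zero_add]
    · intro b _
      simp
    · intro b _
      simp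
  -- assemble
  have huof : ∀ (S T : Finset (↥H → F)) (hS : S.Nonempty) (hST : S = T),
      PMF.uniformOfFinset S hS = PMF.uniformOfFinset T (hST ▸ hS) := by
    rintro S T hS rfl
    rfl
  rw [hfun]
  exact ⟨_, (pmf_map_uniform_of_const_fibers f k hfib).trans (huof _ _ _ himg)⟩
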